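/- Assume every policy's stationary distribution has full support on states. If there exists a state s with Q_{π*,l}(s, π*) > min_{π} Q_{π*,l}(s, π), then the greedy policy π' defined by π'(s) ∈ argmin_{a∈A} Q_{π*,l}(s,a) for all s satisfies η_l(π') < η_l(π*); in particular if additionally η_l(π*) ≤ v then η_l(π') < v. -/
import Mathlib

open Real

/-- If every stationary state distribution has full support and some state admits a strict
improvement over π* in the relative Q-values, then the greedy policy π' has strictly
smaller average loss than π*; in particular, if η(π*) ≤ v then η(π') < v. -/
theorem stmt_13 {nS : ℕ} (Pol : Type*) (πstar π' : Pol)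
    (stateDist : Pol → Fin nS → ℝ) (hsd : ∀ p s, 0 < stateDist p s)
    (η : Pol → ℝ) (v : ℝ)
    (Q : Fin nS → Pol → ℝ)
    (hkey : ∀ p, η p - η πstar = ∑ s, stateDist p s * (Q s p - Q s πstar))
    (hgreedy : ∀ s p, Q s π' ≤ Q s p)
    (hstrict : ∃ s, Q s π' < Q s πstar) :
    η π' < η πstar ∧ (η πstar ≤ v → η π' < v) := by
  obtain ⟨s0, hs0⟩ := hstrict
  have hsum : (∑ s, stateDist π' s * (Q s π' - Q s πstar)) < 0 := by
    have : ∑ s, stateDist π' s * (Q s π' - Q s πstar) < ∑ s : Fin nS, (0:ℝ) := by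
      apply Finset.sum_lt_sum
      · intro i _
        exact mul_nonpos_of_nonneg_of_nonpos (hsd π' i).le
          (sub_nonpos.mpr (hgreedy i πstar))
      · exact ⟨s0, Finset.mem_univ s0,
          mul_neg_of_pos_of_neg (hsd π' s0) (sub_neg.mpr hs0)⟩
    simpa using this
  have h1 : η π' < η πstar := by
    have := hkey π'
    linarith
  exact ⟨h1, fun hv => lt_of_lt_of_le h1 hv⟩
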